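/- Let n, w be integers with 1 ≤ w ≤ n−1 and let q be an integer with q ≥ 1 + C(n−1, w−1). Then there exists a set C of words of length n and weight w over Fin q such that any two distinct members of C have Hamming distance at least w+1 and every w-element subset of Fin n is the support of exactly one codeword of C (so |C| = C(n,w)). -/

import Mathlib

/-- The weight of a word `x : Fin n → Fin q`: the number of nonzero coordinates. -/
def wt {n q : ℕ} (x : Fin n → Fin q) : ℕ :=
  (Finset.univ.filter fun i => (x i : ℕ) ≠ 0).card

/-- The support of a word `x : Fin n → Fin q`: the set of nonzero coordinates. -/
def supp {n q : ℕ} (x : Fin n → Fin q) : Finset (Fin n) :=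
  Finset.univ.filter fun i => (x i : ℕ) ≠ 0

/-- For every alphabet of size `q ≥ 1 + C(n-1, w-1)` there is an `(n, w+1, w)_q`
code: a set of words of length `n` and weight `w` over `Fin q` with minimum
Hamming distance `w + 1` in which every `w`-element subset of `Fin n` is the
support of exactly one codeword; consequently it has `C(n,w)` codewords. -/
theorem exists_code_d_eq_w_add_one (n w q : ℕ) (hw1 : 1 ≤ w) (hw : w ≤ n - 1)
    (hq : 1 + Nat.choose (n - 1) (w - 1) ≤ q) :
    ∃ C : Finset (Fin n → Fin q),
      (∀ c ∈ C, wt c = w) ∧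
      (∀ c₁ ∈ C, ∀ c₂ ∈ C, c₁ ≠ c₂ → w + 1 ≤ hammingDist c₁ c₂) ∧
      (∀ S : Finset (Fin n), S.card = w → ∃! c, c ∈ C ∧ supp c = S) ∧
      C.card = Nat.choose n w := by
  classical
  have hn : 1 ≤ n := by omega
  have hq1 : 1 ≤ q := le_trans (Nat.le_add_right 1 _) hq
  haveI : NeZero q := ⟨by omega⟩
  have hcards : ∀ i : Fin n,
      Fintype.card ((Finset.univ.erase i).powersetCard (w-1) : Finset (Finset (Fin n)))
        ≤ Fintype.card {x : Fin q // x ≠ 0} := by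
    intro i
    rw [Fintype.card_coe, Finset.card_powersetCard,
      Finset.card_erase_of_mem (Finset.mem_univ i), Finset.card_univ, Fintype.card_fin,
      Fintype.card_subtype_compl, Fintype.card_subtype_eq, Fintype.card_fin]
    omega
  have g : ∀ i : Fin n,
      ((Finset.univ.erase i).powersetCard (w-1) : Finset (Finset (Fin n))) ↪
        {x : Fin q // x ≠ 0} :=
    fun i => (Function.Embedding.nonempty_of_card_le (hcards i)).some
  -- membership proof for erased sets
  have hmem : ∀ (S : Finset (Fin n)) (i : Fin n), i ∈ S → S.card = w →
      S.erase i ∈ (Finset.univ.erase i).powersetCard (w-1) := by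
    intro S i hi hS
    rw [Finset.mem_powersetCard]
    exact ⟨Finset.erase_subset_erase i (Finset.subset_univ S),
      by rw [Finset.card_erase_of_mem hi, hS]⟩
  -- the codeword with support S
  set c : Finset (Fin n) → Fin n → Fin q := fun S i =>
    if h : i ∈ S ∧ S.card = w then (g i ⟨S.erase i, hmem S i h.1 h.2⟩).1 else 0 with hc
  have hval : ∀ (S : Finset (Fin n)) (i : Fin n), S.card = w →
      (i ∈ S → c S i ≠ 0) ∧ (i ∉ S → c S i = 0) := by
    intro S i hS
    constructor
    · intro hi
      simp only [hc, dif_pos (⟨hi, hS⟩ : i ∈ S ∧ S.card = w)]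
      exact (g i ⟨S.erase i, hmem S i hi hS⟩).2
    · intro hi
      simp only [hc]
      rw [dif_neg]
      tauto
  have hsupp : ∀ S : Finset (Fin n), S.card = w → supp (c S) = S := by
    intro S hS
    ext i
    have hcoe : (c S i : ℕ) = 0 ↔ c S i = 0 := by rw [Fin.ext_iff, Fin.val_zero]
    simp only [supp, Finset.mem_filter, Finset.mem_univ, true_and, ne_eq, hcoe]
    constructor
    · intro h
      by_contra hi
      exact h ((hval S i hS).2 hi)
    · intro hi
      exact (hval S i hS).1 hi
  -- two codewords agreeing at a common support point are equal
  have key : ∀ S₁ S₂ : Finset (Fin n), S₁.card = w → S₂.card = w → ∀ i : Fin n,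
      i ∈ S₁ → i ∈ S₂ → c S₁ i = c S₂ i → S₁ = S₂ := by
    intro S₁ S₂ h₁ h₂ i hi₁ hi₂ heq
    simp only [hc, dif_pos (⟨hi₁, h₁⟩ : i ∈ S₁ ∧ S₁.card = w),
      dif_pos (⟨hi₂, h₂⟩ : i ∈ S₂ ∧ S₂.card = w)] at heq
    have h3 := (g i).injective (Subtype.ext heq)
    have h4 : S₁.erase i = S₂.erase i := congrArg Subtype.val h3
    have : insert i (S₁.erase i) = insert i (S₂.erase i) := by rw [h4]
    rwa [Finset.insert_erase hi₁, Finset.insert_erase hi₂] at this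
  -- distance bound
  have hdist : ∀ S₁ S₂ : Finset (Fin n), S₁.card = w → S₂.card = w → S₁ ≠ S₂ →
      w + 1 ≤ hammingDist (c S₁) (c S₂) := by
    intro S₁ S₂ h₁ h₂ hne
    have hsub : S₁ ∪ S₂ ⊆ Finset.univ.filter fun i => c S₁ i ≠ c S₂ i := by
      intro i hi
      simp only [Finset.mem_filter, Finset.mem_univ, true_and]
      rcases Finset.mem_union.mp hi with hi1 | hi2
      · by_cases hi2 : i ∈ S₂
        · exact fun h => hne (key S₁ S₂ h₁ h₂ i hi1 hi2 h)
        · intro h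
          exact (hval S₁ i h₁).1 hi1 (h.trans ((hval S₂ i h₂).2 hi2))
      · by_cases hi1 : i ∈ S₁
        · exact fun h => hne (key S₁ S₂ h₁ h₂ i hi1 hi2 h)
        · intro h
          exact (hval S₂ i h₂).1 hi2 (((hval S₁ i h₁).2 hi1).symm.trans h).symm
    have hcard1 : w + 1 ≤ (S₁ ∪ S₂).card := by
      have hss : S₁ ⊂ S₁ ∪ S₂ := by
        refine Finset.ssubset_iff_of_subset Finset.subset_union_left |>.mpr ?_
        by_contra h
        push_neg at h
        have : S₂ ⊆ S₁ := fun x hx => by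
          by_contra hx1
          exact hx1 (h x (Finset.mem_union_right _ hx))
        exact hne (Finset.eq_of_subset_of_card_le this (le_of_eq (h₁.trans h₂.symm))).symm
      have := Finset.card_lt_card hss
      omega
    calc w + 1 ≤ (S₁ ∪ S₂).card := hcard1
      _ ≤ _ := Finset.card_le_card hsub
      _ = hammingDist (c S₁) (c S₂) := by rw [hammingDist]
  -- the code
  refine ⟨(Finset.univ.powersetCard w).image c, ?_, ?_, ?_, ?_⟩
  · intro x hx
    obtain ⟨S, hS, rfl⟩ := Finset.mem_image.mp hx
    have hS' : S.card = w := (Finset.mem_powersetCard.mp hS).2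
    have := hsupp S hS'
    simpa [wt, supp, hS'] using congrArg Finset.card this
  · intro c₁ hc₁ c₂ hc₂ hne
    obtain ⟨S₁, hS₁, rfl⟩ := Finset.mem_image.mp hc₁
    obtain ⟨S₂, hS₂, rfl⟩ := Finset.mem_image.mp hc₂
    exact hdist S₁ S₂ (Finset.mem_powersetCard.mp hS₁).2 (Finset.mem_powersetCard.mp hS₂).2
      (fun h => hne (by rw [h]))
  · intro S hS
    refine ⟨c S, ⟨Finset.mem_image_of_mem c (Finset.mem_powersetCard.mpr
      ⟨Finset.subset_univ S, hS⟩), hsupp S hS⟩, ?_⟩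
    rintro x ⟨hx, hxS⟩
    obtain ⟨S', hS', rfl⟩ := Finset.mem_image.mp hx
    have : S' = S := by rw [← hsupp S' (Finset.mem_powersetCard.mp hS').2, hxS]
    rw [this]
  · rw [Finset.card_image_of_injOn, Finset.card_powersetCard, Finset.card_univ,
      Fintype.card_fin]
    intro S₁ hS₁ S₂ hS₂ h
    have h₁ := (Finset.mem_powersetCard.mp (Finset.mem_coe.mp hS₁)).2
    have h₂ := (Finset.mem_powersetCard.mp (Finset.mem_coe.mp hS₂)).2
    rw [← hsupp S₁ h₁, ← hsupp S₂ h₂, h]
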